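/- Suppose along each run at least two players are active infinitely often. If (s, r) is an equilibrium, then there exists a strong equilibrium s* whose unique consistent run is r. Consequently, the set of equilibrium runs equals the set of strong equilibrium runs. -/
import Mathlib


/-- Stages: non-positive integers. -/
abbrev Stage : Type := {n : ℤ // n ≤ 0}

/-- A run assigns an action to each stage. -/
abbrev Run (A : Type) : Type := Stage → A

/-- A position at stage `n` records the actions at all stages `k < n`. -/
abbrev Position (A : Type) (n : ℤ) : Type := {k : ℤ // k < n} → A

/-- The space of all positions. -/
abbrev Pos (A : Type) : Type := Σ n : Stage, Position A n.1

/-- The position induced by a run `r` at stage `n`. -/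
def restrictRun {A : Type} (r : Run A) (n : Stage) : Position A n.1 :=
  fun k => r ⟨k.1, le_trans k.2.le n.2⟩

/-- A run `r` is consistent with a strategy profile `s` (with owner function `ι`). -/
def ConsistentP {I A : Type} (ι : Pos A → I) (s : I → Pos A → A) (r : Run A) : Prop :=
  ∀ n : Stage, r n = s (ι ⟨n, restrictRun r n⟩) ⟨n, restrictRun r n⟩

/-- `(s, r)` is an equilibrium: `r` is consistent with `s` and, for each stage `n`, the profile
`s` induces a Nash equilibrium in the finite subgame starting at the position of `r` at stage
`n`. The latter is expressed as: for every player `i` and every profile `s'` differing from `s`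
only in player `i`'s strategy, the run that agrees with `r` before stage `n` and follows `s'`
from stage `n` onward gives player `i` at most `u i r`. -/
def Equilibrium {I A : Type} (ι : Pos A → I) (u : I → Run A → ℝ)
    (s : I → Pos A → A) (r : Run A) : Prop :=
  ConsistentP ι s r ∧
  ∀ n : Stage, ∀ i : I, ∀ s' : I → Pos A → A, (∀ j : I, j ≠ i → s' j = s j) →
    ∀ r' : Run A, (∀ k : Stage, k.1 < n.1 → r' k = r k) →
      (∀ m : Stage, n.1 ≤ m.1 →
        r' m = s' (ι ⟨m, restrictRun r' m⟩) ⟨m, restrictRun r' m⟩) →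
      u i r' ≤ u i r

/-- `s` is a strong equilibrium with unique consistent run `r`: `r` is the unique run
consistent with `s`, and for every player `i` and every deviation `s'i` of her strategy, every
run consistent with the deviated profile gives player `i` at most `u i r`. -/
def StrongEquilibrium {I A : Type} [DecidableEq I] (ι : Pos A → I) (u : I → Run A → ℝ)
    (s : I → Pos A → A) (r : Run A) : Prop :=
  ConsistentP ι s r ∧ (∀ r' : Run A, ConsistentP ι s r' → r' = r) ∧
  ∀ (i : I) (s'i : Pos A → A) (r' : Run A),
    ConsistentP ι (Function.update s i s'i) r' → u i r' ≤ u i r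

/-- Player `i` is active infinitely often along the run `r`. -/
def ActiveIO {I A : Type} (ι : Pos A → I) (i : I) (r : Run A) : Prop :=
  {n : Stage | ι ⟨n, restrictRun r n⟩ = i}.Infinite

namespace SE11
variable {I A : Type}

def dev (r : Run A) (p : Pos A) : Set ℤ :=
  {k | ∃ hk : k < p.1.1, p.2 ⟨k, hk⟩ ≠ r ⟨k, le_of_lt (lt_of_lt_of_le hk p.1.2)⟩}

def DrunSet (r r' : Run A) : Set ℤ := {k | ∃ hk : k ≤ 0, r' ⟨k, hk⟩ ≠ r ⟨k, hk⟩}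

lemma mem_Drun (r r' : Run A) (n : Stage) : n.1 ∈ DrunSet r r' ↔ r' n ≠ r n :=
  ⟨fun ⟨_, h⟩ => h, fun h => ⟨n.2, h⟩⟩

lemma dev_run (r r' : Run A) (n : Stage) :
    dev r ⟨n, restrictRun r' n⟩ = DrunSet r r' ∩ Set.Iio n.1 := by
  ext k
  constructor
  · rintro ⟨hk, hne⟩
    exact ⟨⟨le_of_lt (lt_of_lt_of_le hk n.2), hne⟩, hk⟩
  · rintro ⟨⟨hk0, hne⟩, hk⟩
    exact ⟨hk, hne⟩

def subpos (p : Pos A) (k : ℤ) (hk : k < p.1.1) : Pos A :=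
  ⟨⟨k, le_of_lt (lt_of_lt_of_le hk p.1.2)⟩, fun k' => p.2 ⟨k'.1, lt_trans k'.2 hk⟩⟩

def owners (ι : Pos A → I) (r : Run A) (p : Pos A) : Set I :=
  {j | ∃ (k : ℤ) (hk : k < p.1.1),
      p.2 ⟨k, hk⟩ ≠ r ⟨k, le_of_lt (lt_of_lt_of_le hk p.1.2)⟩ ∧ ι (subpos p k hk) = j}

def oP (ι : Pos A → I) (r' : Run A) (d : I) (k : ℤ) : I :=
  if hk : k ≤ 0 then ι ⟨⟨k, hk⟩, restrictRun r' ⟨k, hk⟩⟩ else d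

lemma oP_stage (ι : Pos A → I) (r' : Run A) (d : I) (n : Stage) :
    oP ι r' d n.1 = ι ⟨n, restrictRun r' n⟩ := dif_pos n.2

lemma owners_run (ι : Pos A → I) (r r' : Run A) (d : I) (n : Stage) :
    owners ι r ⟨n, restrictRun r' n⟩
      = {j | ∃ k, k ∈ DrunSet r r' ∧ k < n.1 ∧ oP ι r' d k = j} := by
  ext j
  constructor
  · rintro ⟨k, hk, hne, hι⟩
    have hk0 : k ≤ 0 := le_of_lt (lt_of_lt_of_le hk n.2)
    refine ⟨k, ⟨hk0, hne⟩, hk, ?_⟩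
    rw [oP, dif_pos hk0]
    exact hι
  · rintro ⟨k, ⟨hk0, hne⟩, hk, hι⟩
    refine ⟨k, hk, hne, ?_⟩
    rw [oP, dif_pos hk0] at hι
    exact hι

open Classical in
noncomputable def star (ι : Pos A → I) (r : Run A) (s : I → Pos A → A) (c : Stage → A)
    (j : I) (p : Pos A) : A :=
  if BddBelow (dev r p) then s j p
  else if (∃ p' : I, owners ι r p = {p'} ∧ p' ≠ j) then c p.1 else r p.1

/-- An infinite set of stages contains stages below any bound. -/
lemma exists_lt_of_infinite (S : Set Stage) (hS : S.Infinite) (N : ℤ) :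
    ∃ n ∈ S, n.1 < N := by
  have hfin : {n : Stage | N ≤ n.1}.Finite := by
    apply Set.Finite.subset
      (Set.Finite.preimage (Set.injOn_of_injective Subtype.val_injective) (Set.finite_Icc N 0))
    intro n hn
    exact ⟨hn, n.2⟩
  obtain ⟨n, hnS, hn⟩ := (hS.diff hfin).nonempty
  exact ⟨n, hnS, by simpa using hn⟩

/-- Key lemma: no run with deviation set unbounded below is consistent with a unilateral
deviation from `star`. -/
lemma punish [Fintype I] [Nonempty I] [DecidableEq I] (ι : Pos A → I)
    (htwo : ∀ r : Run A, ∃ i j : I, i ≠ j ∧ ActiveIO ι i r ∧ ActiveIO ι j r)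
    (r : Run A) (s : I → Pos A → A) (c : Stage → A) (hcne : ∀ n, c n ≠ r n)
    (i : I) (s'i : Pos A → A) (r' : Run A)
    (hcons : ConsistentP ι (Function.update (star ι r s c) i s'i) r')
    (hunbdd : ¬ BddBelow (DrunSet r r')) : False := by
  classical
  set D := DrunSet r r' with hD
  -- unboundedness in usable form
  have hun : ∀ b : ℤ, ∃ k ∈ D, k < b := by
    intro b
    rcases not_bddBelow_iff.1 hunbdd b with ⟨k, hk, hkb⟩
    exact ⟨k, hk, hkb⟩
  -- every position along r' has unbounded deviation set
  have hdev : ∀ n : Stage, ¬ BddBelow (dev r ⟨n, restrictRun r' n⟩) := by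
    intro n hb
    apply hunbdd
    rcases hb with ⟨b, hblb⟩
    refine ⟨min b n.1, fun k hk => ?_⟩
    by_cases hkn : k < n.1
    · have : b ≤ k := hblb ((dev_run r r' n) ▸ (Set.mem_inter hk hkn))
      omega
    · omega
  -- behavior of non-deviating movers
  have hstepc : ∀ n : Stage, ι ⟨n, restrictRun r' n⟩ ≠ i →
      (∃ p', owners ι r ⟨n, restrictRun r' n⟩ = {p'} ∧ p' ≠ ι ⟨n, restrictRun r' n⟩) →
      r' n = c n := by
    intro n hj hsing
    have h := hcons n
    rw [Function.update_of_ne hj] at h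
    rw [h, star, if_neg (hdev n), if_pos hsing]
  have hstepr : ∀ n : Stage, ι ⟨n, restrictRun r' n⟩ ≠ i →
      ¬ (∃ p', owners ι r ⟨n, restrictRun r' n⟩ = {p'} ∧ p' ≠ ι ⟨n, restrictRun r' n⟩) →
      r' n = r n := by
    intro n hj hsing
    have h := hcons n
    rw [Function.update_of_ne hj] at h
    rw [h, star, if_neg (hdev n), if_neg hsing]
  -- the set of eternal deviators
  set Q : Finset I :=
    Finset.univ.filter (fun j => ∀ n : ℤ, ∃ k, k ∈ D ∧ k < n ∧ oP ι r' i k = j) with hQ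
  -- a uniform bound below which only eternal deviators deviate
  have hAll : ∀ j : I, ∃ Nj : ℤ,
      (¬ (∀ n : ℤ, ∃ k, k ∈ D ∧ k < n ∧ oP ι r' i k = j)) →
      ∀ k, k ∈ D → k < Nj → oP ι r' i k ≠ j := by
    intro j
    by_cases h : ∀ n : ℤ, ∃ k, k ∈ D ∧ k < n ∧ oP ι r' i k = j
    · exact ⟨0, fun h' => absurd h h'⟩
    · push_neg at h
      obtain ⟨n, hn⟩ := h
      exact ⟨n, fun _ k hk hkn => hn k hk hkn⟩
  choose Nf hNf using hAll
  set N : ℤ := Finset.inf' Finset.univ Finset.univ_nonempty Nf with hNdef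
  have hQground : ∀ k, k ∈ D → k < N → oP ι r' i k ∈ Q := by
    intro k hk hkN
    rw [hQ, Finset.mem_filter]
    refine ⟨Finset.mem_univ _, ?_⟩
    by_contra h
    exact hNf _ h k hk (lt_of_lt_of_le hkN (Finset.inf'_le _ (Finset.mem_univ _))) rfl
  have hQup : ∀ j ∈ Q, ∀ n : ℤ, ∃ k, k ∈ D ∧ k < n ∧ oP ι r' i k = j := by
    intro j hj
    exact (Finset.mem_filter.1 hj).2
  have hOwnQ : ∀ n : Stage, n.1 ≤ N →
      owners ι r ⟨n, restrictRun r' n⟩ = (↑Q : Set I) := by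
    intro n hn
    rw [owners_run ι r r' i n]
    ext j
    simp only [Set.mem_setOf_eq, Finset.coe_filter, Finset.mem_coe]
    constructor
    · rintro ⟨k, hk, hkn, rfl⟩
      exact hQground k hk (lt_of_lt_of_le hkn hn)
    · intro hj
      obtain ⟨k, hk, hkn, hok⟩ := hQup j hj n.1
      exact ⟨k, hk, hkn, hok⟩
  have hQne : Q.Nonempty := by
    obtain ⟨k, hk, hkN⟩ := hun N
    exact ⟨_, hQground k hk hkN⟩
  -- every deviation below N is owned by a member of Q; case on shape of Q
  by_cases hsing : ∃ q, Q = {q}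
  · -- Q = {q}
    obtain ⟨q, hq⟩ := hsing
    have hqQ : q ∈ Q := by rw [hq]; exact Finset.mem_singleton_self q
    -- movers strictly below N are q or i
    have hmov : ∀ n : Stage, n.1 < N →
        ι ⟨n, restrictRun r' n⟩ = q ∨ ι ⟨n, restrictRun r' n⟩ = i := by
      intro n hn
      by_contra h
      push_neg at h
      obtain ⟨hjq, hji⟩ := h
      have hco : owners ι r ⟨n, restrictRun r' n⟩ = ({q} : Set I) := by
        rw [hOwnQ n (le_of_lt hn), hq]; simp
      have hdevn : r' n = c n :=
        hstepc n hji ⟨q, hco, fun hqj => hjq hqj.symm⟩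
      have hmemn : n.1 ∈ D := (mem_Drun r r' n).2 (by rw [hdevn]; exact hcne n)
      have := hQground n.1 hmemn hn
      rw [oP_stage, hq, Finset.mem_singleton] at this
      exact hjq this
    -- deviations strictly below N are owned by i
    have hdevi : ∀ k, k ∈ D → k < N → oP ι r' i k = i := by
      intro k hkD hkN
      have hk0 : k ≤ 0 := hkD.1
      set κ : Stage := ⟨k, hk0⟩ with hκ
      rcases hmov κ hkN with hq' | hi'
      · -- mover is q; then q follows r, contradiction unless q = i
        by_cases hqi : q = i
        · rw [oP, dif_pos hk0]; rw [show ι ⟨⟨k,hk0⟩, restrictRun r' ⟨k,hk0⟩⟩ = q from hq', hqi]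
        · exfalso
          have hns : ¬ (∃ p', owners ι r ⟨κ, restrictRun r' κ⟩ = {p'} ∧
              p' ≠ ι ⟨κ, restrictRun r' κ⟩) := by
            rintro ⟨p', hp', hpj⟩
            rw [hOwnQ κ (le_of_lt hkN), hq] at hp'
            simp only [Finset.coe_singleton, Set.singleton_eq_singleton_iff] at hp'
            exact hpj (hp'.symm ▸ hq'.symm)
          have := hstepr κ (by rw [hq']; exact hqi) hns
          exact (mem_Drun r r' κ).1 hkD this
      · rw [oP, dif_pos hk0]; exact hi'
    -- hence q = i
    have hqi : q = i := by
      obtain ⟨k, hkD, hkN, hok⟩ := hQup q hqQ N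
      rw [← hok]; exact (hdevi k hkD hkN)
    -- so all movers below N are i, contradicting two active players
    obtain ⟨i₁, i₂, hi12, ha1, ha2⟩ := htwo r'
    obtain ⟨n₁, hn₁S, hn₁⟩ := exists_lt_of_infinite _ ha1 N
    obtain ⟨n₂, hn₂S, hn₂⟩ := exists_lt_of_infinite _ ha2 N
    have e₁ : i₁ = i := by
      rcases hmov n₁ hn₁ with h | h
      · rw [← hn₁S, h, hqi]
      · rw [← hn₁S, h]
    have e₂ : i₂ = i := by
      rcases hmov n₂ hn₂ with h | h
      · rw [← hn₂S, h, hqi]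
      · rw [← hn₂S, h]
    exact hi12 (e₁.trans e₂.symm)
  · -- Q is not a singleton: every deviation below N is owned by i, so Q ⊆ {i}
    have hdevi : ∀ k, k ∈ D → k < N → oP ι r' i k = i := by
      intro k hkD hkN
      have hk0 : k ≤ 0 := hkD.1
      set κ : Stage := ⟨k, hk0⟩ with hκ
      by_contra hne
      rw [oP, dif_pos hk0] at hne
      have hns : ¬ (∃ p', owners ι r ⟨κ, restrictRun r' κ⟩ = {p'} ∧
          p' ≠ ι ⟨κ, restrictRun r' κ⟩) := by
        rintro ⟨p', hp', _⟩
        rw [hOwnQ κ (le_of_lt hkN)] at hp'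
        exact hsing ⟨p', Finset.coe_injective (by rw [hp', Finset.coe_singleton])⟩
      have := hstepr κ hne hns
      exact (mem_Drun r r' κ).1 hkD this
    have : Q = {i} := by
      apply Finset.eq_singleton_iff_unique_mem.2
      constructor
      · obtain ⟨j, hj⟩ := hQne
        obtain ⟨k, hkD, hkN, hok⟩ := hQup j hj N
        rw [← (hdevi k hkD hkN), hok]
        exact hj
      · intro j hj
        obtain ⟨k, hkD, hkN, hok⟩ := hQup j hj N
        rw [← hok]; exact hdevi k hkD hkN
    exact hsing ⟨i, this⟩

/-- At on-path positions the deviation set is empty. -/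
lemma dev_self (r : Run A) (n : Stage) : dev r ⟨n, restrictRun r n⟩ = ∅ := by
  ext k
  simp only [Set.mem_empty_iff_false, iff_false]
  rintro ⟨hk, hne⟩
  exact hne rfl

/-- `r` is consistent with `star`. -/
lemma star_consistent (ι : Pos A → I) [DecidableEq I] (r : Run A) (s : I → Pos A → A)
    (c : Stage → A) (hc : ConsistentP ι s r) : ConsistentP ι (star ι r s c) r := by
  intro n
  rw [star, if_pos (by rw [dev_self]; exact bddBelow_empty)]
  exact hc n

/-- If `r'` agrees with `r` strictly below `n`, the corresponding positions coincide. -/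
lemma restrict_eq (r r' : Run A) (n : Stage) (h : ∀ k : Stage, k.1 < n.1 → r' k = r k) :
    restrictRun r' n = restrictRun r n := by
  funext k
  exact h ⟨k.1, le_trans k.2.le n.2⟩ k.2

/-- If the deviation set is empty, the runs coincide. -/
lemma run_eq_of_empty (r r' : Run A) (h : ∀ k, k ∉ DrunSet r r') : r' = r := by
  funext n
  by_contra hne
  exact h n.1 ((mem_Drun r r' n).2 hne)

/-- `r` is the unique run consistent with `star`. -/
lemma star_unique [Fintype I] [Nonempty I] [DecidableEq I] (ι : Pos A → I)
    (htwo : ∀ r : Run A, ∃ i j : I, i ≠ j ∧ ActiveIO ι i r ∧ ActiveIO ι j r)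
    (r : Run A) (s : I → Pos A → A) (c : Stage → A) (hcne : ∀ n, c n ≠ r n)
    (hc : ConsistentP ι s r) (r' : Run A) (hcons : ConsistentP ι (star ι r s c) r') :
    r' = r := by
  classical
  by_cases hbdd : BddBelow (DrunSet r r')
  · by_cases hne : (DrunSet r r').Nonempty
    · exfalso
      obtain ⟨b, hb⟩ := hbdd
      obtain ⟨m, hmD, hmin⟩ := Int.exists_least_of_bdd (P := fun k => k ∈ DrunSet r r')
        ⟨b, fun z hz => hb hz⟩ hne
      have hm0 : m ≤ 0 := hmD.1
      set μ : Stage := ⟨m, hm0⟩ with hμ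
      have hpre : ∀ k : Stage, k.1 < μ.1 → r' k = r k := by
        intro k hk
        have hk2 : k.1 < m := hk
        by_contra hne'
        exact absurd (hmin k.1 ((mem_Drun r r' k).2 hne')) (by omega)
      have hres : restrictRun r' μ = restrictRun r μ := restrict_eq r r' μ hpre
      have h := hcons μ
      rw [hres, star, if_pos (by rw [dev_self]; exact bddBelow_empty)] at h
      rw [← hc μ] at h
      exact (mem_Drun r r' μ).1 hmD h
    · exact run_eq_of_empty r r' (fun k hk => hne ⟨k, hk⟩)
  · exfalso
    have : ConsistentP ι
        (Function.update (star ι r s c) (Classical.arbitrary I) (star ι r s c (Classical.arbitrary I))) r' := by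
      rw [Function.update_eq_self]
      exact hcons
    exact punish ι htwo r s c hcne (Classical.arbitrary I) _ r' this hbdd

/-- The payoff bound for unilateral deviations from `star`. -/
lemma star_payoff [Fintype I] [Nonempty I] [DecidableEq I] (ι : Pos A → I)
    (u : I → Run A → ℝ)
    (htwo : ∀ r : Run A, ∃ i j : I, i ≠ j ∧ ActiveIO ι i r ∧ ActiveIO ι j r)
    (r : Run A) (s : I → Pos A → A) (c : Stage → A) (hcne : ∀ n, c n ≠ r n)
    (hEq : Equilibrium ι u s r) (i : I) (s'i : Pos A → A) (r' : Run A)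
    (hcons : ConsistentP ι (Function.update (star ι r s c) i s'i) r') :
    u i r' ≤ u i r := by
  classical
  obtain ⟨hc, hnash⟩ := hEq
  by_cases hbdd : BddBelow (DrunSet r r')
  · by_cases hne : (DrunSet r r').Nonempty
    · obtain ⟨b, hb⟩ := hbdd
      obtain ⟨m, hmD, hmin⟩ := Int.exists_least_of_bdd (P := fun k => k ∈ DrunSet r r')
        ⟨b, fun z hz => hb hz⟩ hne
      have hm0 : m ≤ 0 := hmD.1
      set μ : Stage := ⟨m, hm0⟩ with hμ
      have hpre : ∀ k : Stage, k.1 < μ.1 → r' k = r k := by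
        intro k hk
        have hk2 : k.1 < m := hk
        by_contra hne'
        exact absurd (hmin k.1 ((mem_Drun r r' k).2 hne')) (by omega)
      refine hnash μ i (Function.update s i s'i)
        (fun j hj => Function.update_of_ne hj _ _) r' hpre ?_
      intro m' hm'
      have h := hcons m'
      by_cases hji : ι ⟨m', restrictRun r' m'⟩ = i
      · rw [hji, Function.update_self] at h ⊢
        exact h
      · rw [Function.update_of_ne hji] at h ⊢
        rw [h, star, if_pos ?_]
        refine BddBelow.mono ?_ ⟨b, fun z hz => hb hz⟩
        rw [dev_run]
        exact Set.inter_subset_left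
    · have : r' = r := run_eq_of_empty r r' (fun k hk => hne ⟨k, hk⟩)
      rw [this]
  · exact absurd (punish ι htwo r s c hcne i s'i r' hcons hbdd) not_false

/-- A strong equilibrium is an equilibrium (with the same profile). -/
lemma strong_to_eq [DecidableEq I] (ι : Pos A → I) (u : I → Run A → ℝ)
    (s : I → Pos A → A) (r : Run A) (hS : StrongEquilibrium ι u s r) :
    Equilibrium ι u s r := by
  obtain ⟨h1, _h2, h3⟩ := hS
  refine ⟨h1, ?_⟩
  intro n i s' hs' r' hpre hpost
  refine h3 i (fun p => if p.1.1 < n.1 then r' p.1 else s' i p) r' ?_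
  intro k
  by_cases hkn : k.1 < n.1
  · have hres : restrictRun r' k = restrictRun r k :=
      restrict_eq r r' k (fun k' hk' => hpre k' (lt_trans hk' hkn))
    by_cases hji : ι ⟨k, restrictRun r' k⟩ = i
    · rw [hji, Function.update_self]
      exact (if_pos hkn).symm
    · rw [Function.update_of_ne hji]
      rw [hpre k hkn, hres]
      exact h1 k
  · have hk' : n.1 ≤ k.1 := le_of_not_gt hkn
    by_cases hji : ι ⟨k, restrictRun r' k⟩ = i
    · rw [hji, Function.update_self]
      rw [hpost k hk', hji]
      exact (if_neg hkn).symm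
    · rw [Function.update_of_ne hji]
      rw [hpost k hk', hs' _ hji]

end SE11

/-- if along every run at least two players are active infinitely often, then
every equilibrium run is the unique consistent run of some strong equilibrium; consequently
the set of equilibrium runs equals the set of strong equilibrium runs. -/
theorem equilibrium_gives_strong_equilibrium (I A : Type) [Fintype I] [Nonempty I]
    [DecidableEq I] [Fintype A] (hA : 2 ≤ Fintype.card A) (ι : Pos A → I)
    (u : I → Run A → ℝ) (hbd : ∀ i : I, ∃ C : ℝ, ∀ r : Run A, |u i r| ≤ C)
    (htwo : ∀ r : Run A, ∃ i j : I, i ≠ j ∧ ActiveIO ι i r ∧ ActiveIO ι j r) :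
    (∀ (s : I → Pos A → A) (r : Run A), Equilibrium ι u s r →
      ∃ s' : I → Pos A → A, StrongEquilibrium ι u s' r) ∧
    {r : Run A | ∃ s : I → Pos A → A, Equilibrium ι u s r} =
      {r : Run A | ∃ s : I → Pos A → A, StrongEquilibrium ι u s r} := by
  classical
  have main : ∀ (s : I → Pos A → A) (r : Run A), Equilibrium ι u s r →
      ∃ s' : I → Pos A → A, StrongEquilibrium ι u s' r := by
    intro s r hE
    have hcc : ∀ n : Stage, ∃ a : A, a ≠ r n := fun n =>
      Fintype.exists_ne_of_one_lt_card (by omega) (r n)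
    choose c hcne using hcc
    refine ⟨SE11.star ι r s c, ?_, ?_, ?_⟩
    · exact SE11.star_consistent ι r s c hE.1
    · exact fun r' h => SE11.star_unique ι htwo r s c hcne hE.1 r' h
    · exact fun i s'i r' h => SE11.star_payoff ι u htwo r s c hcne hE i s'i r' h
  refine ⟨main, ?_⟩
  ext r
  simp only [Set.mem_setOf_eq]
  constructor
  · rintro ⟨s, hE⟩
    exact main s r hE
  · rintro ⟨s, hS⟩
    exact ⟨s, SE11.strong_to_eq ι u s r hS⟩
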